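/- Let d ≥ 1, let V : ℤ^d → ℝ be bounded, and let H be the bounded self-adjoint operator on ℓ²(ℤ^d; ℂ) given by (Hψ)(m) = ∑_{m' : ‖m−m'‖₁ = 1} ψ(m') + V(m)ψ(m). Fix an index 1 ≤ j ≤ d. Then for every ψ ∈ ℓ²(ℤ^d; ℂ) and every t ∈ ℝ, the inequality (∑'_{m ∈ ℤ^d} m_j² · |(e^{−itH}ψ)(m)|²)^{1/2} ≤ (∑'_{m ∈ ℤ^d} m_j² · |ψ(m)|²)^{1/2} + 2|t|·‖ψ‖ holds in the extended nonnegative reals [0, ∞]. In particular, if ∑'_{m} m_j²·|ψ(m)|² < ∞ then ∑'_{m} m_j²·|(e^{−itH}ψ)(m)|² < ∞ for all t ∈ ℝ. -/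

import Mathlib

open Filter
open scoped ENNReal BigOperators

noncomputable section

/-- The Hilbert space `ℓ²(ℤ^d; ℂ)`. -/
abbrev l2Zd (d : ℕ) : Type := lp (fun _ : Fin d → ℤ => ℂ) 2

/-- The time evolution `e^{-itH}` of a bounded operator `H` on `ℓ²(ℤ^d; ℂ)`. -/
def timeEvol {d : ℕ} (H : l2Zd d →L[ℂ] l2Zd d) (t : ℝ) : l2Zd d →L[ℂ] l2Zd d :=
  NormedSpace.exp ((-(t : ℂ) * Complex.I) • H)

namespace BallisticAux

variable {ι : Type*}

local notation "E" => lp (fun _ : ι => ℂ) 2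

lemma summable_sq (f : E) : Summable (fun m => ‖f m‖ ^ 2) := by
  have h := (memℓp_gen_iff (p := 2) (by norm_num)).1 (lp.memℓp f)
  have : ∀ m : ι, ‖f m‖ ^ (2 : ℝ≥0∞).toReal = ‖f m‖ ^ 2 := by
    intro m
    rw [show (2 : ℝ≥0∞).toReal = ((2 : ℕ) : ℝ) by norm_num, Real.rpow_natCast]
  simpa [this] using h

lemma memℓp_of_sq {f : ι → ℂ} (h : Summable fun m => ‖f m‖ ^ 2) :
    Memℓp f 2 := by
  apply memℓp_gen
  have : ∀ m : ι, ‖f m‖ ^ (2 : ℝ≥0∞).toReal = ‖f m‖ ^ 2 := by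
    intro m
    rw [show (2 : ℝ≥0∞).toReal = ((2 : ℕ) : ℝ) by norm_num, Real.rpow_natCast]
  simpa [this] using h

lemma norm_sq_eq (f : E) : ‖f‖ ^ 2 = ∑' m, ‖f m‖ ^ 2 := by
  have h := lp.norm_rpow_eq_tsum (p := 2) (by norm_num) f
  have c : ∀ x : ℝ, x ^ (2 : ℝ≥0∞).toReal = x ^ 2 := by
    intro x
    rw [show (2 : ℝ≥0∞).toReal = ((2 : ℕ) : ℝ) by norm_num, Real.rpow_natCast]
  simpa [c] using h

lemma norm_eq_of_sq {f g : E} (h : ‖f‖ ^ 2 = ‖g‖ ^ 2) : ‖f‖ = ‖g‖ := by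
  have := congrArg Real.sqrt h
  rwa [Real.sqrt_sq (norm_nonneg f), Real.sqrt_sq (norm_nonneg g)] at this

lemma norm_le_of_sq {f : E} {c : ℝ} (hc : 0 ≤ c) (h : ‖f‖ ^ 2 ≤ c ^ 2) : ‖f‖ ≤ c := by
  have := Real.sqrt_le_sqrt h
  rwa [Real.sqrt_sq (norm_nonneg f), Real.sqrt_sq hc] at this

section mulOp

lemma mulOp_bound [Nonempty ι] (a : ι → ℂ) (C : ℝ) (hC : ∀ m, ‖a m‖ ≤ C)
    (f : E) (g : E) (hg : ∀ m, g m = a m * f m) : ‖g‖ ≤ C * ‖f‖ := by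
  have h0 : 0 ≤ C := le_trans (norm_nonneg _) (hC (Classical.arbitrary _))
  apply norm_le_of_sq (by positivity)
  rw [norm_sq_eq, mul_pow]
  have hle : ∀ m, ‖g m‖ ^ 2 ≤ C ^ 2 * ‖f m‖ ^ 2 := by
    intro m
    rw [hg m, norm_mul, mul_pow]
    gcongr
    exact hC m
  calc (∑' m, ‖g m‖ ^ 2) ≤ ∑' m, C ^ 2 * ‖f m‖ ^ 2 :=
        Summable.tsum_le_tsum hle (summable_sq g) ((summable_sq f).mul_left (C ^ 2))
    _ = C ^ 2 * ‖f‖ ^ 2 := by rw [tsum_mul_left, norm_sq_eq]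

lemma mulOp_mem [Nonempty ι] (a : ι → ℂ) (C : ℝ) (hC : ∀ m, ‖a m‖ ≤ C) (f : E) :
    Memℓp (fun m => a m * f m) 2 := by
  apply memℓp_of_sq
  refine Summable.of_nonneg_of_le (fun m => by positivity)
    (fun m => ?_) ((summable_sq f).mul_left (C ^ 2))
  calc ‖a m * f m‖ ^ 2 = ‖a m‖ ^ 2 * ‖f m‖ ^ 2 := by rw [norm_mul, mul_pow]
    _ ≤ C ^ 2 * ‖f m‖ ^ 2 := by
        gcongr
        exact hC m

def mulOp [Nonempty ι] (a : ι → ℂ) (C : ℝ) (hC : ∀ m, ‖a m‖ ≤ C) : E →L[ℂ] E :=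
  LinearMap.mkContinuous
    { toFun := fun f => (⟨fun m => a m * f m, mulOp_mem a C hC f⟩ : E)
      map_add' := by
        intro f g
        apply lp.ext
        funext m
        simp only [lp.coeFn_add, Pi.add_apply]
        exact mul_add _ _ _
      map_smul' := by
        intro c f
        apply lp.ext
        funext m
        simp only [lp.coeFn_smul, Pi.smul_apply, RingHom.id_apply, smul_eq_mul]
        ring }
    C
    (fun f => mulOp_bound a C hC f _ (fun m => rfl))

@[simp] lemma mulOp_apply [Nonempty ι] (a : ι → ℂ) (C : ℝ) (hC : ∀ m, ‖a m‖ ≤ C) (f : E) (m : ι) :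
    mulOp a C hC f m = a m * f m := rfl

lemma norm_mulOp_apply_le [Nonempty ι] (a : ι → ℂ) (C : ℝ) (hC : ∀ m, ‖a m‖ ≤ C) (f : E) :
    ‖mulOp a C hC f‖ ≤ C * ‖f‖ :=
  mulOp_bound a C hC f _ (fun m => rfl)

end mulOp

section compOp

lemma compOp_mem (σ : ι ≃ ι) (f : E) : Memℓp (fun m => f (σ m)) 2 := by
  apply memℓp_of_sq
  exact (σ.summable_iff (f := fun m => ‖f m‖ ^ 2)).2 (summable_sq f)

def compOp (σ : ι ≃ ι) : E →L[ℂ] E :=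
  LinearMap.mkContinuous
    { toFun := fun f => (⟨fun m => f (σ m), compOp_mem σ f⟩ : E)
      map_add' := by
        intro f g
        apply lp.ext
        funext m
        simp only [lp.coeFn_add, Pi.add_apply]
      map_smul' := by
        intro c f
        apply lp.ext
        funext m
        simp only [lp.coeFn_smul, Pi.smul_apply, RingHom.id_apply] }
    1
    (by
      intro f
      rw [one_mul]
      apply le_of_eq
      apply norm_eq_of_sq
      rw [norm_sq_eq, norm_sq_eq]
      exact σ.tsum_eq (f := fun m => ‖f m‖ ^ 2))

@[simp] lemma compOp_apply (σ : ι ≃ ι) (f : E) (m : ι) :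
    compOp σ f m = f (σ m) := rfl

lemma norm_compOp_apply (σ : ι ≃ ι) (f : E) : ‖compOp σ f‖ = ‖f‖ := by
  apply norm_eq_of_sq
  rw [norm_sq_eq, norm_sq_eq]
  exact σ.tsum_eq (f := fun m => ‖f m‖ ^ 2)

end compOp



section InnerLemmas

lemma inner_mulOp_symm [Nonempty ι] (a : ι → ℝ) (C : ℝ)
    (hC : ∀ m, ‖((a m : ℂ))‖ ≤ C) (f g : E) :
    inner (𝕜 := ℂ) (mulOp (fun m => (a m : ℂ)) C hC f) g
      = inner (𝕜 := ℂ) f (mulOp (fun m => (a m : ℂ)) C hC g) := by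
  rw [lp.inner_eq_tsum, lp.inner_eq_tsum]
  refine tsum_congr fun m => ?_
  simp only [mulOp_apply, RCLike.inner_apply, map_mul, Complex.conj_ofReal,
    RCLike.star_def]
  ring

lemma inner_compOp_symm (σ : ι ≃ ι) (f g : E) :
    inner (𝕜 := ℂ) (compOp σ f) g = inner (𝕜 := ℂ) f (compOp σ.symm g) := by
  rw [lp.inner_eq_tsum, lp.inner_eq_tsum]
  rw [← σ.tsum_eq (fun k => inner (𝕜 := ℂ) (f k) ((compOp σ.symm g) k))]
  refine tsum_congr fun m => ?_
  simp [RCLike.inner_apply]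

end InnerLemmas


section Zd

def trunc (R : ℕ) (k : ℤ) : ℤ := max (-(R : ℤ)) (min (R : ℤ) k)

lemma trunc_abs_le (R : ℕ) (k : ℤ) : |trunc R k| ≤ (R : ℤ) := by
  rw [abs_le]; simp only [trunc, max_def, min_def]; split_ifs <;> omega

lemma trunc_abs_le_abs (R : ℕ) (k : ℤ) : |trunc R k| ≤ |k| := by
  rw [abs_le]; simp only [trunc, max_def, min_def, abs_sub_le_iff]
  rcases abs_cases k with ⟨h1, h2⟩ | ⟨h1, h2⟩ <;> split_ifs <;> omega

lemma trunc_eq_of_abs_le {R : ℕ} {k : ℤ} (h : |k| ≤ (R : ℤ)) : trunc R k = k := by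
  rcases abs_cases k with ⟨h1, h2⟩ | ⟨h1, h2⟩ <;>
    · simp only [trunc, max_def, min_def]; split_ifs <;> omega

lemma trunc_succ_abs_le (R : ℕ) (k : ℤ) : |trunc R k - trunc R (k + 1)| ≤ 1 := by
  rw [abs_le]; simp only [trunc, max_def, min_def]; split_ifs <;> omega

lemma trunc_pred_abs_le (R : ℕ) (k : ℤ) : |trunc R k - trunc R (k - 1)| ≤ 1 := by
  rw [abs_le]; simp only [trunc, max_def, min_def]; split_ifs <;> omega

variable {d : ℕ}

local notation "Ed" => lp (fun _ : Fin d → ℤ => ℂ) 2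

lemma norm_intC_le {k C : ℤ} (h : |k| ≤ C) : ‖((k : ℝ) : ℂ)‖ ≤ (C : ℝ) := by
  rw [Complex.norm_real, Real.norm_eq_abs, ← Int.cast_abs]
  exact_mod_cast h

/-- The truncated position operator in direction `j`. -/
def Xop (j : Fin d) (R : ℕ) : Ed →L[ℂ] Ed :=
  mulOp (fun m => ((trunc R (m j) : ℝ) : ℂ)) R
    (fun m => norm_intC_le (trunc_abs_le R (m j)))

@[simp] lemma Xop_apply (j : Fin d) (R : ℕ) (f : Ed) (m : Fin d → ℤ) :
    Xop j R f m = ((trunc R (m j) : ℝ) : ℂ) * f m := rfl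

/-- Shift operator. -/
def shiftOp (v : Fin d → ℤ) : Ed →L[ℂ] Ed := compOp (Equiv.addRight v)

@[simp] lemma shiftOp_apply (v : Fin d → ℤ) (f : Ed) (m : Fin d → ℤ) :
    shiftOp v f m = f (m + v) := rfl

lemma compOp_addRight_symm (v : Fin d → ℤ) :
    compOp (Equiv.addRight v).symm = shiftOp (-v) := by
  refine ContinuousLinearMap.ext fun f => lp.ext (funext fun m => ?_)
  simp [shiftOp, sub_eq_add_neg]

end Zd

section Zd2

set_option maxHeartbeats 1000000
set_option synthInstance.maxHeartbeats 1000000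

variable {d : ℕ}

local notation "Ed" => lp (fun _ : Fin d → ℤ => ℂ) 2

/-- The commutator operator. -/
def Kop (j : Fin d) (R : ℕ) : Ed →L[ℂ] Ed :=
  mulOp (fun m => (((trunc R (m j) - trunc R (m j + 1) : ℤ) : ℝ) : ℂ)) 1
      (fun m => by simpa using norm_intC_le (trunc_succ_abs_le R (m j))) ∘L
    shiftOp (Pi.single j 1)
  + mulOp (fun m => (((trunc R (m j) - trunc R (m j - 1) : ℤ) : ℝ) : ℂ)) 1
      (fun m => by simpa using norm_intC_le (trunc_pred_abs_le R (m j))) ∘L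
    shiftOp (-(Pi.single j 1))

lemma Kop_bound (j : Fin d) (R : ℕ) (φ : Ed) : ‖Kop j R φ‖ ≤ 2 * ‖φ‖ := by
  simp only [Kop, ContinuousLinearMap.add_apply, ContinuousLinearMap.comp_apply]
  refine le_trans (norm_add_le _ _) ?_
  have h1 := norm_mulOp_apply_le
    (fun m : Fin d → ℤ => (((trunc R (m j) - trunc R (m j + 1) : ℤ) : ℝ) : ℂ)) 1
    (fun m => by simpa using norm_intC_le (trunc_succ_abs_le R (m j)))
    (shiftOp (Pi.single j 1) φ)
  have h2 := norm_mulOp_apply_le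
    (fun m : Fin d → ℤ => (((trunc R (m j) - trunc R (m j - 1) : ℤ) : ℝ) : ℂ)) 1
    (fun m => by simpa using norm_intC_le (trunc_pred_abs_le R (m j)))
    (shiftOp (-(Pi.single j 1)) φ)
  have e1 : ‖shiftOp (Pi.single j 1) φ‖ = ‖φ‖ := norm_compOp_apply _ φ
  have e2 : ‖shiftOp (-(Pi.single j 1)) φ‖ = ‖φ‖ := norm_compOp_apply _ φ
  rw [e1, one_mul] at h1
  rw [e2, one_mul] at h2
  linarith

lemma inner_shiftOp (v : Fin d → ℤ) (f g : Ed) :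
    inner (𝕜 := ℂ) (shiftOp v f) g = inner (𝕜 := ℂ) f (shiftOp (-v) g) := by
  rw [shiftOp, inner_compOp_symm, compOp_addRight_symm]

lemma H_decomp (V : (Fin d → ℤ) → ℝ) (CV : ℝ) (hCV : ∀ m, ‖((V m : ℝ) : ℂ)‖ ≤ CV)
    (H : Ed →L[ℂ] Ed)
    (hH : ∀ (ψ : Ed) (m : Fin d → ℤ),
      H ψ m = (∑ i : Fin d,
          (ψ (m + (Pi.single i 1 : Fin d → ℤ)) + ψ (m - (Pi.single i 1 : Fin d → ℤ))))
        + (V m : ℂ) * ψ m)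
    (φ : Ed) :
    H φ = (∑ i : Fin d, (shiftOp (Pi.single i 1) φ + shiftOp (-(Pi.single i 1)) φ))
      + mulOp (fun m => ((V m : ℝ) : ℂ)) CV hCV φ := by
  apply lp.ext
  funext m
  rw [hH φ m]
  simp only [lp.coeFn_add, Pi.add_apply, lp.coeFn_sum, Finset.sum_apply,
    shiftOp_apply, mulOp_apply, sub_eq_add_neg]

lemma H_selfAdjoint (V : (Fin d → ℤ) → ℝ) (CV : ℝ) (hCV : ∀ m, ‖((V m : ℝ) : ℂ)‖ ≤ CV)
    (H : Ed →L[ℂ] Ed)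
    (hH : ∀ (ψ : Ed) (m : Fin d → ℤ),
      H ψ m = (∑ i : Fin d,
          (ψ (m + (Pi.single i 1 : Fin d → ℤ)) + ψ (m - (Pi.single i 1 : Fin d → ℤ))))
        + (V m : ℂ) * ψ m) :
    IsSelfAdjoint H := by
  rw [ContinuousLinearMap.isSelfAdjoint_iff_isSymmetric]
  intro f g
  simp only [ContinuousLinearMap.coe_coe]
  rw [H_decomp V CV hCV H hH f, H_decomp V CV hCV H hH g]
  simp only [inner_add_left, inner_add_right, sum_inner, inner_sum]
  congr 1
  · refine Finset.sum_congr rfl fun i _ => ?_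
    rw [inner_shiftOp (Pi.single i 1), inner_shiftOp (-(Pi.single i 1)), neg_neg, add_comm]
  · exact inner_mulOp_symm V CV hCV f g

lemma comm_eq (V : (Fin d → ℤ) → ℝ) (H : Ed →L[ℂ] Ed)
    (hH : ∀ (ψ : Ed) (m : Fin d → ℤ),
      H ψ m = (∑ i : Fin d,
          (ψ (m + (Pi.single i 1 : Fin d → ℤ)) + ψ (m - (Pi.single i 1 : Fin d → ℤ))))
        + (V m : ℂ) * ψ m)
    (j : Fin d) (R : ℕ) :
    Xop j R * H - H * Xop j R = Kop j R := by
  refine ContinuousLinearMap.ext fun φ => lp.ext (funext fun m => ?_)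
  simp only [ContinuousLinearMap.sub_apply, ContinuousLinearMap.mul_apply,
    lp.coeFn_sub, Pi.sub_apply, Xop_apply, Kop, ContinuousLinearMap.add_apply,
    ContinuousLinearMap.comp_apply, lp.coeFn_add, Pi.add_apply, mulOp_apply,
    shiftOp_apply]
  rw [hH φ m, hH (Xop j R φ) m]
  simp only [Xop_apply]
  rw [mul_add, Finset.mul_sum, add_sub_add_comm, ← Finset.sum_sub_distrib,
    Finset.sum_eq_single j]
  · have e1 : ((m + Pi.single j 1 : Fin d → ℤ)) j = m j + 1 := by simp
    have e2 : ((m - Pi.single j 1 : Fin d → ℤ)) j = m j - 1 := by simp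
    rw [e1, e2, sub_eq_add_neg m (Pi.single j 1)]
    push_cast
    ring
  · intro i _ hij
    have e1 : ((m + Pi.single i 1 : Fin d → ℤ)) j = m j := by
      simp [Pi.single_eq_of_ne (Ne.symm hij)]
    have e2 : ((m - Pi.single i 1 : Fin d → ℤ)) j = m j := by
      simp [Pi.single_eq_of_ne (Ne.symm hij)]
    rw [e1, e2]
    ring
  · intro h
    exact absurd (Finset.mem_univ j) h

end Zd2

section Hilbert

set_option synthInstance.maxHeartbeats 1000000
set_option maxHeartbeats 1000000

open NormedSpace

variable {F : Type*} [NormedAddCommGroup F] [InnerProductSpace ℂ F] [CompleteSpace F]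

lemma norm_exp_skew_apply (A : F →L[ℂ] F) (hA : star A = -A) (ψ : F) :
    ‖NormedSpace.exp A ψ‖ = ‖ψ‖ := by
  letI : NormedAlgebra ℚ (F →L[ℂ] F) := NormedAlgebra.restrictScalars ℚ ℂ _
  have hu : NormedSpace.exp A ∈ unitary (F →L[ℂ] F) :=
    NormedSpace.exp_mem_unitary_of_mem_skewAdjoint (skewAdjoint.mem_iff.2 hA)
  set u := NormedSpace.exp A with hu_def
  have h1 : star u * u = 1 := (Unitary.mem_iff.1 hu).1
  have h2 : inner (𝕜 := ℂ) (u ψ) (u ψ) = inner (𝕜 := ℂ) ψ ψ := by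
    have := ContinuousLinearMap.adjoint_inner_left u ψ (u ψ)
    rw [← ContinuousLinearMap.star_eq_adjoint] at this
    rw [← this]
    have h3 : star u (u ψ) = ψ := by
      have := congrArg (fun T : F →L[ℂ] F => T ψ) h1
      simpa [ContinuousLinearMap.mul_apply] using this
    rw [h3]
  have h4 : ‖u ψ‖ ^ 2 = ‖ψ‖ ^ 2 := by
    have := congrArg (RCLike.re (K := ℂ)) h2
    rwa [@inner_self_eq_norm_sq ℂ, @inner_self_eq_norm_sq ℂ] at this
  have := congrArg Real.sqrt h4
  rwa [Real.sqrt_sq (norm_nonneg _), Real.sqrt_sq (norm_nonneg _)] at this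

lemma evolution_bound (H X K : F →L[ℂ] F) (hH : IsSelfAdjoint H)
    (hK : X * H - H * X = K) (CK : ℝ) (hCK : ∀ φ : F, ‖K φ‖ ≤ CK * ‖φ‖)
    (ψ : F) (t : ℝ) :
    ‖X (NormedSpace.exp ((-(t : ℂ) * Complex.I) • H) ψ)‖
      ≤ ‖X ψ‖ + CK * ‖ψ‖ * |t| := by
  set a : F →L[ℂ] F := (-Complex.I) • H with ha_def
  have ha : ∀ s : ℝ, s • a = (-(s : ℂ) * Complex.I) • H := by
    intro s
    rw [ha_def, ← smul_assoc]
    congr 1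
    rw [Complex.real_smul]
    ring
  have hstar_a : star a = -a := by
    rw [ha_def, star_smul, hH.star_eq]
    simp [neg_smul]
  have hskew : ∀ s : ℝ, star (s • a) = -(s • a) := by
    intro s
    rw [star_smul, hstar_a, star_trivial, smul_neg]
  have hskewneg : ∀ s : ℝ, star (s • (-a)) = -(s • (-a)) := by
    intro s
    rw [star_smul, star_neg, hstar_a, star_trivial, neg_neg, ← smul_neg, ← neg_neg a]
    simp
  -- derivative facts
  have hexp_eq : (NormedSpace.exp : (F →L[ℂ] F) → _) = NormedSpace.exp :=
    rfl
  have hder : ∀ (b : F →L[ℂ] F) (s : ℝ),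
      HasDerivAt (fun u : ℝ => NormedSpace.exp (u • b))
        (NormedSpace.exp (s • b) * b) s := by
    intro b s
    have := hasDerivAt_exp_smul_const (𝕂 := ℝ) b s
    rwa [hexp_eq] at this
  -- the commutator
  have hcomm : X * a - a * X = (-Complex.I) • K := by
    rw [ha_def, mul_smul_comm, smul_mul_assoc, ← smul_sub, hK]
  -- the function F
  set G : ℝ → (F →L[ℂ] F) := fun s =>
    (NormedSpace.exp (s • (-a)) * X) * NormedSpace.exp (s • a) with hG_def
  set D : ℝ → (F →L[ℂ] F) := fun s =>
    NormedSpace.exp (s • (-a)) * ((-Complex.I) • K) * NormedSpace.exp (s • a) with hD_def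
  have hGder : ∀ s : ℝ, HasDerivAt G (D s) s := by
    intro s
    have h1 := (hder (-a) s).mul_const X
    have h2 := hder a s
    have h3 := h1.mul h2
    have hca : a * NormedSpace.exp (s • a) = NormedSpace.exp (s • a) * a :=
      (((Commute.refl a).smul_right s).exp_right).eq
    simp only [hG_def, hD_def]
    refine HasDerivAt.congr_deriv h3 ?_
    rw [← hcomm, ← hca]
    noncomm_ring
  -- apply to ψ
  have hgder : ∀ s : ℝ, HasDerivAt (fun s => G s ψ) (D s ψ) s := by
    intro s
    have := ((ContinuousLinearMap.apply ℂ F ψ).restrictScalars ℝ).hasFDerivAt.comp_hasDerivAt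
      s (hGder s)
    exact this
  have hDbound : ∀ s : ℝ, ‖D s ψ‖ ≤ CK * ‖ψ‖ := by
    intro s
    have e1 : D s ψ = NormedSpace.exp (s • (-a))
        ((-Complex.I) • K (NormedSpace.exp (s • a) ψ)) := by
      simp [hD_def, ContinuousLinearMap.mul_apply]
    rw [e1, norm_exp_skew_apply _ (hskewneg s), norm_smul]
    simp only [norm_neg, Complex.norm_I, one_mul]
    calc ‖K (NormedSpace.exp (s • a) ψ)‖
        ≤ CK * ‖NormedSpace.exp (s • a) ψ‖ := hCK _
      _ = CK * ‖ψ‖ := by rw [norm_exp_skew_apply _ (hskew s)]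
  have hmean : ‖G t ψ - G 0 ψ‖ ≤ CK * ‖ψ‖ * |t| := by
    have := Convex.norm_image_sub_le_of_norm_hasDerivWithin_le
      (f := fun s => G s ψ) (f' := fun s => D s ψ) (C := CK * ‖ψ‖)
      (fun x _ => (hgder x).hasDerivWithinAt)
      (fun x _ => hDbound x) convex_univ (Set.mem_univ (0 : ℝ)) (Set.mem_univ t)
    simpa using this
  have hG0 : G 0 ψ = X ψ := by
    simp [hG_def, NormedSpace.exp_zero]
  have hGt : ‖G t ψ‖ = ‖X (NormedSpace.exp (t • a) ψ)‖ := by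
    have : G t ψ = NormedSpace.exp (t • (-a))
        (X (NormedSpace.exp (t • a) ψ)) := by
      simp [hG_def, ContinuousLinearMap.mul_apply]
    rw [this, norm_exp_skew_apply _ (hskewneg t)]
  have : ‖X (NormedSpace.exp (t • a) ψ)‖ ≤ ‖X ψ‖ + CK * ‖ψ‖ * |t| := by
    rw [← hGt]
    calc ‖G t ψ‖ = ‖X ψ + (G t ψ - G 0 ψ)‖ := by
          rw [← hG0]; congr 1; abel
      _ ≤ ‖X ψ‖ + ‖G t ψ - G 0 ψ‖ := norm_add_le _ _
      _ ≤ ‖X ψ‖ + CK * ‖ψ‖ * |t| := add_le_add le_rfl hmean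
  rwa [ha t] at this

end Hilbert

section ENN

set_option maxHeartbeats 1000000
set_option synthInstance.maxHeartbeats 1000000

variable {d : ℕ}

local notation "Ed" => lp (fun _ : Fin d → ℤ => ℂ) 2

/-- Second moment in direction `j`. -/
def Sinf (j : Fin d) (φ : Ed) : ℝ≥0∞ :=
  ∑' m : Fin d → ℤ, ENNReal.ofReal (((m j : ℝ)) ^ 2 * ‖φ m‖ ^ 2)

/-- Truncated second moment. -/
def SR (j : Fin d) (R : ℕ) (φ : Ed) : ℝ≥0∞ :=
  ∑' m : Fin d → ℤ, ENNReal.ofReal (((trunc R (m j) : ℝ)) ^ 2 * ‖φ m‖ ^ 2)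

lemma SR_eq (j : Fin d) (R : ℕ) (φ : Ed) :
    SR j R φ = ENNReal.ofReal (‖Xop j R φ‖ ^ 2) := by
  rw [norm_sq_eq, ENNReal.ofReal_tsum_of_nonneg (fun m => by positivity)
    (summable_sq _), SR]
  refine tsum_congr fun m => ?_
  congr 1
  rw [Xop_apply, norm_mul, mul_pow, Complex.norm_real, Real.norm_eq_abs, sq_abs]

lemma SR_le_Sinf (j : Fin d) (R : ℕ) (φ : Ed) : SR j R φ ≤ Sinf j φ := by
  refine ENNReal.tsum_le_tsum fun m => ENNReal.ofReal_le_ofReal ?_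
  have h : |((trunc R (m j) : ℝ))| ≤ |((m j : ℝ))| := by
    rw [← Int.cast_abs, ← Int.cast_abs]
    exact_mod_cast trunc_abs_le_abs R (m j)
  have h2 : ((trunc R (m j) : ℝ)) ^ 2 ≤ ((m j : ℝ)) ^ 2 := by
    rw [← sq_abs ((trunc R (m j) : ℝ)), ← sq_abs ((m j : ℝ))]
    exact pow_le_pow_left₀ (abs_nonneg _) h 2
  exact mul_le_mul_of_nonneg_right h2 (by positivity)

lemma Sinf_le_iSup (j : Fin d) (φ : Ed) : Sinf j φ ≤ ⨆ R : ℕ, SR j R φ := by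
  rw [Sinf, ENNReal.tsum_eq_iSup_sum]
  refine iSup_le fun F => ?_
  set R : ℕ := F.sup (fun m => (m j).natAbs) with hR
  have key : ∀ m ∈ F, trunc R (m j) = m j := by
    intro m hm
    apply trunc_eq_of_abs_le
    rw [Int.abs_eq_natAbs]
    exact_mod_cast Finset.le_sup (f := fun m : Fin d → ℤ => (m j).natAbs) hm
  calc (∑ m ∈ F, ENNReal.ofReal (((m j : ℝ)) ^ 2 * ‖φ m‖ ^ 2))
      = ∑ m ∈ F, ENNReal.ofReal (((trunc R (m j) : ℝ)) ^ 2 * ‖φ m‖ ^ 2) := by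
        refine Finset.sum_congr rfl fun m hm => ?_
        rw [key m hm]
    _ ≤ SR j R φ := ENNReal.sum_le_tsum F
    _ ≤ ⨆ R : ℕ, SR j R φ := le_iSup (fun R : ℕ => SR j R φ) R

lemma sq_half (x : ℝ≥0∞) : (x ^ 2) ^ ((1 : ℝ) / 2) = x := by
  rw [← ENNReal.rpow_natCast x 2, ← ENNReal.rpow_mul]
  norm_num

lemma SR_pow (j : Fin d) (R : ℕ) (φ : Ed) :
    SR j R φ = (ENNReal.ofReal ‖Xop j R φ‖) ^ 2 := by
  rw [SR_eq, ENNReal.ofReal_pow (norm_nonneg _)]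

lemma main_bound (V : (Fin d → ℤ) → ℝ) (CV : ℝ) (hCV : ∀ m, ‖((V m : ℝ) : ℂ)‖ ≤ CV)
    (H : Ed →L[ℂ] Ed)
    (hH : ∀ (ψ : Ed) (m : Fin d → ℤ),
      H ψ m = (∑ i : Fin d,
          (ψ (m + (Pi.single i 1 : Fin d → ℤ)) + ψ (m - (Pi.single i 1 : Fin d → ℤ))))
        + (V m : ℂ) * ψ m)
    (j : Fin d) (ψ : Ed) (t : ℝ) :
    Sinf j (NormedSpace.exp ((-(t : ℂ) * Complex.I) • H) ψ) ≤
      (Sinf j ψ ^ ((1 : ℝ) / 2) + ENNReal.ofReal (2 * |t| * ‖ψ‖)) ^ 2 := by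
  set u : Ed := NormedSpace.exp ((-(t : ℂ) * Complex.I) • H) ψ with hu
  set B : ℝ≥0∞ := Sinf j ψ ^ ((1 : ℝ) / 2) + ENNReal.ofReal (2 * |t| * ‖ψ‖) with hB
  have hXB : ∀ R : ℕ, ENNReal.ofReal ‖Xop j R u‖ ≤ B := by
    intro R
    have h1 : ‖Xop j R u‖ ≤ ‖Xop j R ψ‖ + 2 * ‖ψ‖ * |t| :=
      evolution_bound H (Xop j R) (Kop j R) (H_selfAdjoint V CV hCV H hH)
        (comm_eq V H hH j R) 2 (Kop_bound j R) ψ t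
    calc ENNReal.ofReal ‖Xop j R u‖
        ≤ ENNReal.ofReal (‖Xop j R ψ‖ + 2 * ‖ψ‖ * |t|) := ENNReal.ofReal_le_ofReal h1
      _ ≤ ENNReal.ofReal ‖Xop j R ψ‖ + ENNReal.ofReal (2 * ‖ψ‖ * |t|) :=
          ENNReal.ofReal_add_le
      _ ≤ B := by
          rw [hB]
          refine add_le_add ?_ (by rw [show 2 * ‖ψ‖ * |t| = 2 * |t| * ‖ψ‖ by ring])
          have h2 : ENNReal.ofReal ‖Xop j R ψ‖ = (SR j R ψ) ^ ((1 : ℝ) / 2) := by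
            rw [SR_pow, sq_half]
          rw [h2]
          exact ENNReal.rpow_le_rpow (SR_le_Sinf j R ψ) (by norm_num)
  have h3 : Sinf j u ≤ B ^ 2 := by
    refine le_trans (Sinf_le_iSup j u) (iSup_le fun R => ?_)
    rw [SR_pow]
    exact pow_le_pow_left' (hXB R) 2
  exact h3

end ENN

end BallisticAux

theorem ballistic_upper_bound_discrete
    (d : ℕ) (hd : 1 ≤ d)
    (V : (Fin d → ℤ) → ℝ) (hV : ∃ C : ℝ, ∀ m : Fin d → ℤ, |V m| ≤ C)
    (H : l2Zd d →L[ℂ] l2Zd d)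
    (hH : ∀ (ψ : l2Zd d) (m : Fin d → ℤ),
      H ψ m = (∑ i : Fin d,
          (ψ (m + (Pi.single i 1 : Fin d → ℤ)) + ψ (m - (Pi.single i 1 : Fin d → ℤ))))
        + (V m : ℂ) * ψ m)
    (j : Fin d) (ψ : l2Zd d) (t : ℝ) :
    ((∑' m : Fin d → ℤ,
        ENNReal.ofReal (((m j : ℝ)) ^ 2 * ‖timeEvol H t ψ m‖ ^ 2)) ^ ((1 : ℝ) / 2)
      ≤ (∑' m : Fin d → ℤ,
          ENNReal.ofReal (((m j : ℝ)) ^ 2 * ‖ψ m‖ ^ 2)) ^ ((1 : ℝ) / 2)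
        + ENNReal.ofReal (2 * |t| * ‖ψ‖)) ∧
    ((∑' m : Fin d → ℤ, ENNReal.ofReal (((m j : ℝ)) ^ 2 * ‖ψ m‖ ^ 2)) < ⊤ →
      ∀ s : ℝ, (∑' m : Fin d → ℤ,
        ENNReal.ofReal (((m j : ℝ)) ^ 2 * ‖timeEvol H s ψ m‖ ^ 2)) < ⊤) := by
  classical
  obtain ⟨C, hC⟩ := hV
  have hCV : ∀ m : Fin d → ℤ, ‖((V m : ℝ) : ℂ)‖ ≤ C := fun m => by
    rw [Complex.norm_real, Real.norm_eq_abs]; exact hC m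
  have key : ∀ s : ℝ, BallisticAux.Sinf j (timeEvol H s ψ)
      ≤ (BallisticAux.Sinf j ψ ^ ((1 : ℝ) / 2) + ENNReal.ofReal (2 * |s| * ‖ψ‖)) ^ 2 :=
    fun s => BallisticAux.main_bound V C hCV H hH j ψ s
  constructor
  · have h := key t
    have h2 := ENNReal.rpow_le_rpow h (by norm_num : (0 : ℝ) ≤ 1 / 2)
    rw [BallisticAux.sq_half] at h2
    exact h2
  · intro hfin s
    refine lt_of_le_of_lt (key s) ?_
    have h1 : BallisticAux.Sinf j ψ ^ ((1 : ℝ) / 2) < ⊤ :=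
      ENNReal.rpow_lt_top_of_nonneg (by norm_num) hfin.ne
    have h2 : BallisticAux.Sinf j ψ ^ ((1 : ℝ) / 2) + ENNReal.ofReal (2 * |s| * ‖ψ‖) < ⊤ :=
      ENNReal.add_lt_top.2 ⟨h1, ENNReal.ofReal_lt_top⟩
    exact ENNReal.pow_lt_top h2
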